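/- Let H be a group that is not solvable. Then the restricted direct product Π₀ i : ℤ, H is not virtually solvable: every subgroup of finite index in Π₀ i : ℤ, H fails to be solvable. -/

import Mathlib

/-- The restricted direct product `Π₀ i : ℤ, H`: the subgroup of `ℤ → H`
consisting of the finitely supported functions (pointwise multiplication). -/
def RestrictedProductZ (H : Type*) [Group H] : Subgroup (ℤ → H) where
  carrier := {f | (Function.mulSupport f).Finite}
  one_mem' := by simp [Function.mulSupport_one]
  mul_mem' := by
    intro f g hf hg
    exact ((hf.union hg).subset (Function.mulSupport_mul f g))
  inv_mem' := by
    intro f hf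
    simpa [Function.mulSupport_inv] using hf

/-- Embedding of `H` at coordinate `i` of the restricted product. -/
def rpEmb {H : Type*} [Group H] (i : ℤ) : H →* RestrictedProductZ H :=
  (MonoidHom.mulSingle (fun _ : ℤ => H) i).codRestrict (RestrictedProductZ H)
    fun h => (Set.finite_singleton i).subset Pi.mulSupport_mulSingle_subset

theorem rpEmb_injective {H : Type*} [Group H] (i : ℤ) :
    Function.Injective (rpEmb (H := H) i) := by
  intro a b h
  exact Pi.mulSingle_injective i (congrArg Subtype.val h)

theorem rpEmb_commute {H : Type*} [Group H] {i j : ℤ} (hij : i ≠ j) (a b : H) :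
    Commute (rpEmb i a) (rpEmb j b) := by
  apply Subtype.ext
  exact Pi.mulSingle_commute (f := fun _ : ℤ => H) hij a b

open scoped commutatorElement

/-- If `H` is not solvable, then the restricted direct product `Π₀ i : ℤ, H`
is not virtually solvable: no finite-index subgroup of it is solvable. -/
theorem restrictedProduct_not_virtually_solvable (H : Type*) [Group H]
    (hH : ¬ IsSolvable H) (G : Subgroup (RestrictedProductZ H)) (hG : G.index ≠ 0) :
    ¬ IsSolvable G := by
  intro hGsolv
  haveI : Group.IsSolvable G := hGsolv
  haveI : G.FiniteIndex := ⟨hG⟩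
  set N := G.normalCore with hN
  haveI : N.FiniteIndex := Subgroup.finiteIndex_normalCore G
  haveI : Finite (RestrictedProductZ H ⧸ N) := Subgroup.finite_quotient_of_finiteIndex
  set ψ : ℤ → (H →* (RestrictedProductZ H ⧸ N)) :=
    fun i => (QuotientGroup.mk' N).comp (rpEmb i) with hψ
  haveI : Finite (Subgroup (RestrictedProductZ H ⧸ N)) :=
    Finite.of_injective _ (SetLike.coe_injective
      (A := Subgroup (RestrictedProductZ H ⧸ N)))
  obtain ⟨i, j, hij, hEq⟩ :=
    Finite.exists_ne_map_eq_of_infinite (fun i : ℤ => (ψ i).range)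
  -- the image of coordinate `i` in the quotient is abelian
  have key : ∀ a b : H, rpEmb i ⁅a, b⁆ ∈ N := by
    intro a b
    have ha : ψ i a ∈ (ψ j).range := hEq ▸ ⟨a, rfl⟩
    obtain ⟨a', ha'⟩ := ha
    have hcomm : Commute (ψ i a) (ψ i b) := by
      rw [← ha']
      exact ((rpEmb_commute hij.symm a' b).map (QuotientGroup.mk' N))
    have h1 : ψ i ⁅a, b⁆ = 1 := by
      rw [map_commutatorElement]
      exact commutatorElement_eq_one_iff_commute.mpr hcomm
    rwa [hψ, MonoidHom.comp_apply, ← MonoidHom.mem_ker, QuotientGroup.ker_mk'] at h1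
  -- hence the commutator subgroup of `H` embeds into `N`
  have hmem : ∀ x : commutator H, rpEmb i (x : H) ∈ N := by
    intro x
    have hle : Subgroup.map (rpEmb i) (commutator H) ≤ N := by
      rw [commutator, Subgroup.map_commutator]
      refine Subgroup.commutator_le.mpr ?_
      rintro _ ⟨a, -, rfl⟩ _ ⟨b, -, rfl⟩
      rw [← map_commutatorElement]
      exact key a b
    exact hle ⟨x, x.2, rfl⟩
  let φ : commutator H →* N :=
    ((rpEmb i).comp (Subgroup.subtype _)).codRestrict N fun x => hmem x
  have hφinj : Function.Injective φ := by
    intro x y hxy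
    exact Subtype.ext (rpEmb_injective i (congrArg Subtype.val hxy))
  haveI : Group.IsSolvable N :=
    solvable_of_solvable_injective (Subgroup.inclusion_injective (G.normalCore_le))
  haveI : Group.IsSolvable (commutator H) := solvable_of_solvable_injective hφinj
  refine hH ?_
  refine solvable_of_ker_le_range (commutator H).subtype Abelianization.of ?_
  intro x hx
  rw [Subgroup.range_subtype]
  exact (QuotientGroup.eq_one_iff x).mp hx
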